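/- Define P̂t := (P¹)² − P²P⁰, D̂ := P²P¹ − P³P⁰ + 2, K̂ := (P²)² − P³P¹ in End_ℝ(R), and set C := D̂² − 2(K̂ ∘ P̂t + P̂t ∘ K̂). Then C = (P³)²(P⁰)² − 6 P³P²P¹P⁰ − 3 (P²)²(P¹)² + 4 (P²)³P⁰ + 4 P³(P¹)³ + 3 P²P¹ − 9 P³P⁰, and moreover, as a differential operator, C = −12 M_y ∘ D_x³ − 3 M_{x²} ∘ D_x² + 18 M_{xy} ∘ D_x ∘ D_y + 9 M_{y²} ∘ D_y² + 3 M_x ∘ D_x + M_{4x³ + 27y} ∘ D_y; in particular C is a differential operator of order three, although its expression as a polynomial in P⁰, P¹, P², P³ has degree four. -/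

import Mathlib

open MvPolynomial

noncomputable section

abbrev R3 : Type := MvPolynomial (Fin 3) ℝ

def t : R3 := X 0
def x : R3 := X 1
def y : R3 := X 2

def Dx : Module.End ℝ R3 := (pderiv (1 : Fin 3)).toLinearMap
def Dy : Module.End ℝ R3 := (pderiv (2 : Fin 3)).toLinearMap

/-- Multiplication by a polynomial, as a linear endomorphism. -/
def M (a : R3) : Module.End ℝ R3 := LinearMap.mulLeft ℝ a

def P3 : Module.End ℝ R3 := 3 • (M (t ^ 2) * Dx) + M (t ^ 3) * Dy - 3 • M (y - t * x)
def P2 : Module.End ℝ R3 := 2 • (M t * Dx) + M (t ^ 2) * Dy + M x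
def P1 : Module.End ℝ R3 := Dx + M t * Dy
def P0 : Module.End ℝ R3 := Dy

/-- `P̂t := (P¹)² − P²P⁰`. -/
def Pthat : Module.End ℝ R3 := P1 ^ 2 - P2 * P0
/-- `D̂ := P²P¹ − P³P⁰ + 2`. -/
def Dhat : Module.End ℝ R3 := P2 * P1 - P3 * P0 + 2
/-- `K̂ := (P²)² − P³P¹`. -/
def Khat : Module.End ℝ R3 := P2 ^ 2 - P3 * P1
/-- The Casimir-type operator `C := D̂² − 2(K̂ P̂t + P̂t K̂)`. -/
def Cas : Module.End ℝ R3 := Dhat ^ 2 - 2 • (Khat * Pthat + Pthat * Khat)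


lemma pd_comm21 (p : R3) :
    pderiv (2 : Fin 3) (pderiv (1 : Fin 3) p) = pderiv 1 (pderiv 2 p) := by
  induction p using MvPolynomial.induction_on with
  | C a => simp
  | add p q hp hq => simp [hp, hq]
  | mul_X p k hp =>
      simp only [pderiv_mul, map_add, pderiv_mul, hp, pderiv_X, Pi.single_apply]
      split_ifs <;> simp [hp, add_comm, add_left_comm]

set_option maxHeartbeats 16000000 in
lemma cas_eq : Cas = -(12 • (M y * Dx ^ 3)) - 3 • (M (x ^ 2) * Dx ^ 2) + 18 • (M (x * y) * Dx * Dy)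
      + 9 • (M (y ^ 2) * Dy ^ 2) + 3 • (M x * Dx) + M (4 • x ^ 3 + 27 • y) * Dy := by
  refine LinearMap.ext fun p => ?_
  simp (config := { maxSteps := 10000000 }) only
    [Cas, Dhat, Khat, Pthat, P3, P2, P1, P0, M, Dx, Dy, t, x, y, pow_succ, pow_zero, one_mul,
    Module.End.mul_apply, LinearMap.add_apply, LinearMap.sub_apply, LinearMap.smul_apply,
    LinearMap.neg_apply, LinearMap.mulLeft_apply, Derivation.coeFn_coe,
    Module.End.ofNat_apply, map_add, map_sub, map_smul, map_nsmul, map_neg, map_mul, pderiv_mul,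
    pderiv_one, pderiv_X_self, pderiv_X_of_ne (show (0:Fin 3) ≠ 1 by decide),
    pderiv_X_of_ne (show (0:Fin 3) ≠ 2 by decide),
    pderiv_X_of_ne (show (1:Fin 3) ≠ 2 by decide),
    pderiv_X_of_ne (show (2:Fin 3) ≠ 1 by decide),
    pd_comm21, smul_eq_mul, mul_one, mul_zero, zero_mul, add_zero, zero_add, map_zero,
    smul_add, smul_sub, smul_zero]
  ring

set_option maxHeartbeats 16000000 in
lemma rhs1_eq : P3 ^ 2 * P0 ^ 2 - 6 • (P3 * P2 * P1 * P0) - 3 • (P2 ^ 2 * P1 ^ 2)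
      + 4 • (P2 ^ 3 * P0) + 4 • (P3 * P1 ^ 3) + 3 • (P2 * P1) - 9 • (P3 * P0)
    = -(12 • (M y * Dx ^ 3)) - 3 • (M (x ^ 2) * Dx ^ 2) + 18 • (M (x * y) * Dx * Dy)
      + 9 • (M (y ^ 2) * Dy ^ 2) + 3 • (M x * Dx) + M (4 • x ^ 3 + 27 • y) * Dy := by
  refine LinearMap.ext fun p => ?_
  simp (config := { maxSteps := 10000000 }) only
    [P3, P2, P1, P0, M, Dx, Dy, t, x, y, pow_succ, pow_zero, one_mul,
    Module.End.mul_apply, LinearMap.add_apply, LinearMap.sub_apply, LinearMap.smul_apply,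
    LinearMap.neg_apply, LinearMap.mulLeft_apply, Derivation.coeFn_coe,
    Module.End.ofNat_apply, map_add, map_sub, map_smul, map_nsmul, map_neg, map_mul, pderiv_mul,
    pderiv_one, pderiv_X_self, pderiv_X_of_ne (show (0:Fin 3) ≠ 1 by decide),
    pderiv_X_of_ne (show (0:Fin 3) ≠ 2 by decide),
    pderiv_X_of_ne (show (1:Fin 3) ≠ 2 by decide),
    pderiv_X_of_ne (show (2:Fin 3) ≠ 1 by decide),
    pd_comm21, smul_eq_mul, mul_one, mul_zero, zero_mul, add_zero, zero_add, map_zero,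
    smul_add, smul_sub, smul_zero]
  ring

/-- The operator `C = D̂² − 2(K̂ P̂t + P̂t K̂)` equals the degree-four
polynomial `(P³)²(P⁰)² − 6 P³P²P¹P⁰ − 3 (P²)²(P¹)² + 4 (P²)³P⁰ + 4 P³(P¹)³ + 3 P²P¹ − 9 P³P⁰`
in the generators, and, as a differential operator, equals the third-order operator
`−12 M_y D_x³ − 3 M_{x²} D_x² + 18 M_{xy} D_x D_y + 9 M_{y²} D_y² + 3 M_x D_x + M_{4x³+27y} D_y`. -/
theorem stmt4 :
    (Cas = P3 ^ 2 * P0 ^ 2 - 6 • (P3 * P2 * P1 * P0) - 3 • (P2 ^ 2 * P1 ^ 2)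
      + 4 • (P2 ^ 3 * P0) + 4 • (P3 * P1 ^ 3) + 3 • (P2 * P1) - 9 • (P3 * P0)) ∧
    (Cas = -(12 • (M y * Dx ^ 3)) - 3 • (M (x ^ 2) * Dx ^ 2) + 18 • (M (x * y) * Dx * Dy)
      + 9 • (M (y ^ 2) * Dy ^ 2) + 3 • (M x * Dx) + M (4 • x ^ 3 + 27 • y) * Dy) :=
  ⟨cas_eq.trans rhs1_eq.symm, cas_eq⟩
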